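/- arXiv:2412.18215 — 2 statements merged into one kernel-verified Lean document; each statement's English description precedes it below -/
import Mathlib

section
/- Let $F : \mathbb{R} \to [0,1]$ be the CDF of the uniform distribution on $[-a,b]$ with $a, b > 0$, i.e., $F(t) = (t+a)/(a+b)$ for $t \in [-a,b]$, $F(t)=0$ for $t<-a$, $F(t)=1$ for $t>b$. Let $A$ be the piecewise-constant nondecreasing function that places mass $\bar\mu(a+b)$ at each of the points $s_k = k a + (k-1) b$ for $k = 1, \dots, N$, with $T = N(a+b)$. Then for all $t \in [0,T]$, $\sum_{k=1}^{N} \bar\mu(a+b) F(t - s_k) = \bar\mu t$. -/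
lemma stmt5_aux (a b : ℝ) (ha : 0 < a) (hb : 0 < b)
    (F : ℝ → ℝ)
    (hF : ∀ t, F t = if t < -a then 0 else if t ≤ b then (t + a) / (a + b) else 1) :
    ∀ N : ℕ, ∀ t ∈ Set.Icc (0:ℝ) ((N:ℝ) * (a + b)),
      ∑ k ∈ Finset.range N, (a + b) * F (t - (((k:ℝ)+1) * a + (k:ℝ) * b)) = t := by
  have hc : 0 < a + b := by linarith
  intro N
  induction N with
  | zero =>
      intro t ht
      simp only [Nat.cast_zero, zero_mul] at ht
      have : t = 0 := le_antisymm ht.2 ht.1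
      simp [this]
  | succ N ih =>
      intro t ht
      rw [Finset.sum_range_succ]
      have hsN : t - (((N:ℝ)+1) * a + (N:ℝ) * b) + a = t - (N:ℝ) * (a + b) := by ring
      by_cases hcase : t ≤ (N:ℝ) * (a + b)
      · have hih := ih t ⟨ht.1, hcase⟩
        rw [hih, hF]
        by_cases h1 : t - (((N:ℝ)+1) * a + (N:ℝ) * b) < -a
        · simp [h1]
        · have heq : t = (N:ℝ) * (a + b) := by
            push_neg at h1; linarith
          have h2 : t - (((N:ℝ)+1) * a + (N:ℝ) * b) ≤ b := by nlinarith
          simp only [h1, if_false, h2, if_true]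
          rw [hsN, heq]
          simp
      · push_neg at hcase
        have hupper : t ≤ ((N:ℝ)+1) * (a + b) := by
          have := ht.2; push_cast at this ⊢; linarith
        have hsum : ∀ k ∈ Finset.range N,
            (a + b) * F (t - (((k:ℝ)+1) * a + (k:ℝ) * b)) = (a + b) := by
          intro k hk
          have hkN : (k:ℝ) + 1 ≤ (N:ℝ) := by
            have := Finset.mem_range.mp hk
            exact_mod_cast this
          have hgt : b < t - (((k:ℝ)+1) * a + (k:ℝ) * b) := by nlinarith
          rw [hF]
          rw [if_neg (by linarith), if_neg (by linarith)]
          ring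
        rw [Finset.sum_congr rfl hsum, Finset.sum_const, Finset.card_range]
        have h1 : ¬ (t - (((N:ℝ)+1) * a + (N:ℝ) * b) < -a) := by push_neg; linarith
        have h2 : t - (((N:ℝ)+1) * a + (N:ℝ) * b) ≤ b := by nlinarith
        rw [hF, if_neg h1, if_pos h2, hsN]
        field_simp
        push_cast
        ring

/-- Uniform unpunctuality on `[-a,b]`: placing mass `μ(a+b)` at each point
`s_k = k a + (k-1) b`, `k = 1, …, N`, with `T = N(a+b)`, yields the linear fluid
arrival function: `∑_k μ(a+b) F(t - s_k) = μ t` for all `t ∈ [0,T]`. -/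
theorem stmt5 (a b μ : ℝ) (ha : 0 < a) (hb : 0 < b) (hμ : 0 < μ)
    (N : ℕ) (hN : 1 ≤ N) (T : ℝ) (hT : T = N * (a + b))
    (F : ℝ → ℝ)
    (hF : ∀ t, F t = if t < -a then 0 else if t ≤ b then (t + a) / (a + b) else 1) :
    ∀ t ∈ Set.Icc (0:ℝ) T,
      ∑ k ∈ Finset.range N, μ * (a + b) * F (t - (((k:ℝ)+1) * a + (k:ℝ) * b)) = μ * t := by
  intro t ht
  have := stmt5_aux a b ha hb F hF N t (by rwa [hT] at ht)
  calc ∑ k ∈ Finset.range N, μ * (a + b) * F (t - (((k:ℝ)+1) * a + (k:ℝ) * b))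
      = μ * ∑ k ∈ Finset.range N, (a + b) * F (t - (((k:ℝ)+1) * a + (k:ℝ) * b)) := by
        rw [Finset.mul_sum]; apply Finset.sum_congr rfl; intros; ring
    _ = μ * t := by rw [this]
end

section
/- Let $h, \hat{h} : [0,T] \to \mathbb{R}$ be bounded functions with $h(0), \hat h(0) \geq 0$, and define the discrete regulator $\hat{i} = \mu^{-1} \max_{0 \leq k \leq K} \max\{\mu t_k - \hat{h}(t_k), 0\}$ with $t_k = kT/K$, and the continuous regulator $i = \mu^{-1} \sup_{0 \leq s \leq T} \max\{\mu s - h(s), 0\}$. If $h$ is nondecreasing, then $|i - \hat{i}| \leq \mu^{-1}\left( \sup_{t \in [0,T]} |h(t) - \hat{h}(t)| + \mu T/K \right)$. -/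
open Set

/-- Error between the continuous Skorokhod regulator of a nondecreasing `h` and the
discrete grid regulator of an approximation `ĥ`:
`|i - î| ≤ μ⁻¹ (sup |h - ĥ| + μ T/K)`, stated with a uniform bound `ε`. -/
theorem stmt13 (μ T ε : ℝ) (hμ : 0 < μ) (hT : 0 < T) (hε : 0 ≤ ε)
    (K : ℕ) (hK : 0 < K)
    (h hhat : ℝ → ℝ)
    (hbddh : BddAbove ((fun s => max (μ * s - h s) 0) '' Icc 0 T))
    (hmono : MonotoneOn h (Icc 0 T))
    (h0 : 0 ≤ h 0) (hhat0 : 0 ≤ hhat 0)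
    (hclose : ∀ t ∈ Icc (0:ℝ) T, |h t - hhat t| ≤ ε)
    (i ihat : ℝ)
    (hi : i = μ⁻¹ * sSup ((fun s => max (μ * s - h s) 0) '' Icc 0 T))
    (hihat : ihat = μ⁻¹ * (Finset.range (K+1)).sup' ⟨0, Finset.mem_range.mpr (Nat.succ_pos K)⟩
        (fun k => max (μ * (k * T / K) - hhat (k * T / K)) 0)) :
    |i - ihat| ≤ μ⁻¹ * (ε + μ * T / K) := by
  have hK' : (0:ℝ) < K := by exact_mod_cast hK
  have hTK : 0 < T / K := div_pos hT hK'
  set f : ℝ → ℝ := fun s => max (μ * s - h s) 0 with hf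
  set g : ℕ → ℝ := fun k => max (μ * ((k:ℝ) * T / K) - hhat ((k:ℝ) * T / K)) 0 with hg
  set S := sSup (f '' Icc 0 T) with hS
  set D := (Finset.range (K+1)).sup' ⟨0, Finset.mem_range.mpr (Nat.succ_pos K)⟩ g with hDdef
  have grid_mem : ∀ k ∈ Finset.range (K+1), (k : ℝ) * T / K ∈ Icc (0:ℝ) T := by
    intro k hk
    simp only [Finset.mem_range, Nat.lt_succ_iff] at hk
    have hkR : (k:ℝ) ≤ K := by exact_mod_cast hk
    constructor
    · positivity
    · rw [div_le_iff₀ hK']; nlinarith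
  have hD0 : 0 ≤ D := by
    have h1 : g 0 ≤ D :=
      Finset.le_sup' g (Finset.mem_range.mpr (Nat.succ_pos K))
    have h2 : (0:ℝ) ≤ g 0 := le_max_right _ _
    linarith
  have hDS : D ≤ S + ε := by
    apply Finset.sup'_le
    intro k hk
    have hmem := grid_mem k hk
    have h1 : f ((k:ℝ)*T/K) ≤ S := le_csSup hbddh (mem_image_of_mem _ hmem)
    have hc := hclose _ hmem
    rw [abs_le] at hc
    have hl : μ * ((k:ℝ)*T/K) - h ((k:ℝ)*T/K) ≤ f ((k:ℝ)*T/K) := le_max_left _ _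
    have hr : (0:ℝ) ≤ f ((k:ℝ)*T/K) := le_max_right _ _
    have : g k ≤ f ((k:ℝ)*T/K) + ε := by
      apply max_le
      · linarith [hc.1, hc.2]
      · linarith
    linarith
  have hSD : S ≤ D + (ε + μ * T / K) := by
    apply csSup_le ((nonempty_Icc.mpr hT.le).image f)
    rintro x ⟨s, hs, rfl⟩
    set k := ⌊s * K / T⌋₊ with hkdef
    have hs0 : 0 ≤ s := hs.1
    have hsT : s ≤ T := hs.2
    have hfk : k ≤ K := by
      have h1 : s * K / T ≤ K := by
        rw [div_le_iff₀ hT]; nlinarith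
      calc k ≤ ⌊(K:ℝ)⌋₊ := Nat.floor_le_floor h1
        _ = K := Nat.floor_natCast K
    have hfloor_le : (k:ℝ) ≤ s * K / T := Nat.floor_le (by positivity)
    have hlt : s * K / T < k + 1 := Nat.lt_floor_add_one _
    have htk_le : (k:ℝ) * T / K ≤ s := by
      rw [div_le_iff₀ hK']
      calc (k:ℝ) * T = (s * K / T) * T - ((s * K / T) - k) * T := by ring
        _ ≤ (s * K / T) * T := by nlinarith
        _ = s * K := by field_simp
    have hs_le : s ≤ (k:ℝ) * T / K + T / K := by
      rw [← add_div, le_div_iff₀ hK']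
      have h2 : s * K < ((k:ℝ) + 1) * T := by
        have := (div_lt_iff₀ hT).mp hlt
        linarith
      nlinarith
    have htk_mem : (k:ℝ) * T / K ∈ Icc (0:ℝ) T := ⟨by positivity, le_trans htk_le hsT⟩
    have hmono' : h ((k:ℝ)*T/K) ≤ h s := hmono htk_mem hs htk_le
    have hc := hclose _ htk_mem
    rw [abs_le] at hc
    have hgk : g k ≤ D := Finset.le_sup' g (Finset.mem_range.mpr (Nat.lt_succ_of_le hfk))
    have hgl : μ * ((k:ℝ)*T/K) - hhat ((k:ℝ)*T/K) ≤ g k := le_max_left _ _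
    apply max_le
    · have hmul : μ * s ≤ μ * ((k:ℝ)*T/K) + μ * T / K := by
        have := mul_le_mul_of_nonneg_left hs_le hμ.le
        calc μ * s ≤ μ * ((k:ℝ)*T/K + T/K) := this
          _ = μ * ((k:ℝ)*T/K) + μ * T / K := by ring
      linarith [hc.1]
    · have : 0 ≤ μ * T / K := by positivity
      linarith
  have habs : |S - D| ≤ ε + μ * T / K := by
    rw [abs_sub_le_iff]
    have : 0 ≤ μ * T / K := by positivity
    constructor <;> linarith
  rw [hi, hihat, ← mul_sub, abs_mul, abs_of_pos (inv_pos.mpr hμ)]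
  exact mul_le_mul_of_nonneg_left habs (inv_pos.mpr hμ).le
end
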